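/- arXiv:2603.24368 — 2 statements merged into one kernel-verified Lean document; each statement's English description precedes it below -/
import Mathlib

section
/- There exists a function S* that is continuously differentiable on [L₁,L₂], with S*(x) > 0 for all x ∈ (L₁,L₂), such that d₁(∫_{L₁}^{L₂} J₁(x−y) S*(y) dy − S*(x)) + a(x)·(S*)′(x) = 0 for every x ∈ (L₁,L₂) (existence of a disease-free equilibrium of the nonlocal dispersal–advection equation). -/
open MeasureTheory Set BoundedContinuousFunction

/-- Hypothesis (J1) on a dispersal kernel: nonnegative, continuous, integrable with
total mass one. -/
def KernelJ1 (J : ℝ → ℝ) : Prop :=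
  (∀ x, 0 ≤ J x) ∧ Continuous J ∧ Integrable J ∧ (∫ x, J x) = 1

namespace DFE

noncomputable def clamp (L1 L2 x : ℝ) : ℝ := max L1 (min L2 x)

lemma clamp_mem {L1 L2 : ℝ} (hL : L1 ≤ L2) (x : ℝ) : clamp L1 L2 x ∈ Icc L1 L2 := by
  constructor
  · exact le_max_left _ _
  · simp only [clamp, max_le_iff]
    exact ⟨hL, min_le_left _ _⟩

lemma clamp_of_mem {L1 L2 x : ℝ} (hx : x ∈ Icc L1 L2) : clamp L1 L2 x = x := by
  simp only [clamp]
  rw [min_eq_right hx.2, max_eq_right hx.1]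

lemma clamp_continuous (L1 L2 : ℝ) : Continuous (clamp L1 L2) :=
  continuous_const.max (continuous_const.min continuous_id)

/-- `g = d1 / a`. -/
noncomputable def g (d1 : ℝ) (a : ℝ → ℝ) (x : ℝ) : ℝ := d1 / a x

/-- `B x = ∫_{L1}^x d1 / a`. -/
noncomputable def B (L1 d1 : ℝ) (a : ℝ → ℝ) (x : ℝ) : ℝ := ∫ t in L1..x, g d1 a t

/-- the nonlocal operator `K u t = ∫_{L1}^{L2} J1 (t - y) u y dy`. -/
noncomputable def K (L1 L2 : ℝ) (J1 u : ℝ → ℝ) (t : ℝ) : ℝ :=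
  ∫ y in L1..L2, J1 (t - y) * u y

/-- the fixed point map (before clamping). -/
noncomputable def F (L1 L2 d1 : ℝ) (J1 a : ℝ → ℝ) (u : ℝ → ℝ) (x : ℝ) : ℝ :=
  Real.exp (B L1 d1 a x) *
    (1 + ∫ t in x..L2, g d1 a t * Real.exp (-(B L1 d1 a t)) * K L1 L2 J1 u t)

section lemmas

variable {L1 L2 d1 : ℝ} {J1 a : ℝ → ℝ}

lemma g_cont (ha : Continuous a) (hpos : ∀ x, 0 < a x) : Continuous (g d1 a) :=
  continuous_const.div ha (fun x => (hpos x).ne')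

lemma g_pos (hd1 : 0 < d1) (hpos : ∀ x, 0 < a x) (x : ℝ) : 0 < g d1 a x :=
  div_pos hd1 (hpos x)

lemma B_hasDerivAt (ha : Continuous a) (hpos : ∀ x, 0 < a x) (x : ℝ) :
    HasDerivAt (B L1 d1 a) (g d1 a x) x := by
  have hg := g_cont (d1 := d1) ha hpos
  exact intervalIntegral.integral_hasDerivAt_right (hg.intervalIntegrable _ _)
    (hg.stronglyMeasurableAtFilter _ _) hg.continuousAt

lemma B_cont (ha : Continuous a) (hpos : ∀ x, 0 < a x) : Continuous (B L1 d1 a) := by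
  have : Differentiable ℝ (B L1 d1 a) := fun x => (B_hasDerivAt ha hpos x).differentiableAt
  exact this.continuous

lemma B_nonneg (hd1 : 0 < d1) (hpos : ∀ x, 0 < a x) {x : ℝ} (hx : L1 ≤ x) :
    0 ≤ B L1 d1 a x :=
  intervalIntegral.integral_nonneg hx (fun t _ => (g_pos hd1 hpos t).le)

lemma K_cont (hJ : Continuous J1) {u : ℝ → ℝ} (hu : Continuous u) :
    Continuous (K L1 L2 J1 u) := by
  apply intervalIntegral.continuous_parametric_intervalIntegral_of_continuous'
    (f := fun t y => J1 (t - y) * u y)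
  exact (hJ.comp (continuous_fst.sub continuous_snd)).mul (hu.comp continuous_snd)

lemma K_nonneg (hL : L1 ≤ L2) (hJ0 : ∀ y, 0 ≤ J1 y) {u : ℝ → ℝ} (hu0 : ∀ y, 0 ≤ u y)
    (t : ℝ) : 0 ≤ K L1 L2 J1 u t :=
  intervalIntegral.integral_nonneg hL (fun y _ => mul_nonneg (hJ0 _) (hu0 _))

/-- the mass of the kernel over the window is at most 1. -/
lemma K_mass (hL : L1 ≤ L2) (hJ : KernelJ1 J1) (t : ℝ) :
    (∫ y in L1..L2, J1 (t - y)) ≤ 1 := by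
  obtain ⟨hJ0, hJc, hJi, hJ1⟩ := hJ
  rw [intervalIntegral.integral_comp_sub_left (fun y => J1 y) t]
  rw [intervalIntegral.integral_of_le (by linarith)]
  calc ∫ y in Ioc (t - L2) (t - L1), J1 y ≤ ∫ y, J1 y :=
        setIntegral_le_integral hJi (Filter.Eventually.of_forall hJ0)
    _ = 1 := hJ1

end lemmas


section lemmas2

variable {L1 L2 d1 : ℝ} {J1 a : ℝ → ℝ}

lemma hasDerivAt_integral_to_const {r : ℝ → ℝ} (hr : Continuous r) (L2 x : ℝ) :
    HasDerivAt (fun x => ∫ t in x..L2, r t) (-r x) x := by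
  have h : HasDerivAt (fun x => ∫ t in L2..x, r t) (r x) x :=
    intervalIntegral.integral_hasDerivAt_right (hr.intervalIntegrable _ _)
      (hr.stronglyMeasurableAtFilter _ _) hr.continuousAt
  have heq : (fun x => ∫ t in x..L2, r t) = fun x => -∫ t in L2..x, r t := by
    funext y
    rw [intervalIntegral.integral_symm]
  rw [heq]
  exact h.neg

lemma rho_cont (hd1 : 0 < d1) (ha : Continuous a) (hpos : ∀ x, 0 < a x)
    (hJ : Continuous J1) {u : ℝ → ℝ} (hu : Continuous u) :
    Continuous (fun t => g d1 a t * Real.exp (-(B L1 d1 a t)) * K L1 L2 J1 u t) :=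
  ((g_cont ha hpos).mul ((B_cont ha hpos).neg.rexp)).mul (K_cont hJ hu)

lemma F_hasDerivAt (hd1 : 0 < d1) (ha : Continuous a) (hpos : ∀ x, 0 < a x)
    (hJ : Continuous J1) {u : ℝ → ℝ} (hu : Continuous u) (x : ℝ) :
    HasDerivAt (F L1 L2 d1 J1 a u)
      (g d1 a x * F L1 L2 d1 J1 a u x - g d1 a x * K L1 L2 J1 u x) x := by
  have hρ := rho_cont (L1 := L1) (L2 := L2) hd1 ha hpos hJ hu
  have hW : HasDerivAt (fun x => ∫ t in x..L2,
      g d1 a t * Real.exp (-(B L1 d1 a t)) * K L1 L2 J1 u t)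
      (-(g d1 a x * Real.exp (-(B L1 d1 a x)) * K L1 L2 J1 u x)) x :=
    hasDerivAt_integral_to_const hρ L2 x
  have hB : HasDerivAt (B L1 d1 a) (g d1 a x) x := B_hasDerivAt ha hpos x
  have hE : HasDerivAt (fun x => Real.exp (B L1 d1 a x))
      (Real.exp (B L1 d1 a x) * g d1 a x) x := hB.exp
  have hprod := hE.mul ((hasDerivAt_const x (1:ℝ)).add hW)
  have h1 : Real.exp (B L1 d1 a x) * Real.exp (-(B L1 d1 a x)) = 1 := by
    rw [← Real.exp_add]; simp
  refine hprod.congr_deriv (Eq.symm ?_)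
  unfold F
  simp only [Pi.add_apply]
  linear_combination (g d1 a x * K L1 L2 J1 u x) * h1

lemma F_cont (hd1 : 0 < d1) (ha : Continuous a) (hpos : ∀ x, 0 < a x)
    (hJ : Continuous J1) {u : ℝ → ℝ} (hu : Continuous u) :
    Continuous (F L1 L2 d1 J1 a u) := by
  have : Differentiable ℝ (F L1 L2 d1 J1 a u) :=
    fun x => (F_hasDerivAt hd1 ha hpos hJ hu x).differentiableAt
  exact this.continuous

/-- The weight integral evaluates exactly. -/
lemma weight_integral (ha : Continuous a) (hpos : ∀ x, 0 < a x) (z : ℝ) :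
    (∫ t in z..L2, g d1 a t * Real.exp (-(B L1 d1 a t)))
      = Real.exp (-(B L1 d1 a z)) - Real.exp (-(B L1 d1 a L2)) := by
  have hderiv : ∀ t ∈ uIcc z L2, HasDerivAt (fun t => -Real.exp (-(B L1 d1 a t)))
      (g d1 a t * Real.exp (-(B L1 d1 a t))) t := by
    intro t _
    have hB : HasDerivAt (B L1 d1 a) (g d1 a t) t := B_hasDerivAt ha hpos t
    have h := (hB.neg.exp).neg
    refine h.congr_deriv ?_
    show -(Real.exp (-(B L1 d1 a t)) * -g d1 a t) = g d1 a t * Real.exp (-(B L1 d1 a t))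
    ring
  have hint : IntervalIntegrable (fun t => g d1 a t * Real.exp (-(B L1 d1 a t))) volume z L2 :=
    ((g_cont ha hpos).mul ((B_cont ha hpos).neg.rexp)).intervalIntegrable _ _
  rw [intervalIntegral.integral_eq_sub_of_hasDerivAt hderiv hint]
  ring

end lemmas2

section Phidef

/-- The clamped fixed-point map on bounded continuous functions. -/
noncomputable def Phi (L1 L2 d1 : ℝ) (J1 a : ℝ → ℝ) (hL : L1 ≤ L2) (hd1 : 0 < d1)
    (ha : Continuous a) (hpos : ∀ x, 0 < a x) (hJ : Continuous J1)
    (u : ℝ →ᵇ ℝ) : ℝ →ᵇ ℝ :=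
  have hFc : Continuous (F L1 L2 d1 J1 a u) := F_cont hd1 ha hpos hJ u.continuous
  have hb : ∃ C, ∀ z ∈ Icc L1 L2, ‖F L1 L2 d1 J1 a u z‖ ≤ C :=
    isCompact_Icc.exists_bound_of_continuousOn hFc.continuousOn
  BoundedContinuousFunction.ofNormedAddCommGroup
    (fun x => F L1 L2 d1 J1 a u (clamp L1 L2 x))
    (hFc.comp (clamp_continuous _ _)) hb.choose
    (fun x => hb.choose_spec _ (clamp_mem hL x))

lemma Phi_apply {L1 L2 d1 : ℝ} {J1 a : ℝ → ℝ} (hL : L1 ≤ L2) (hd1 : 0 < d1)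
    (ha : Continuous a) (hpos : ∀ x, 0 < a x) (hJ : Continuous J1)
    (u : ℝ →ᵇ ℝ) (x : ℝ) :
    Phi L1 L2 d1 J1 a hL hd1 ha hpos hJ u x = F L1 L2 d1 J1 a u (clamp L1 L2 x) := by
  simp only [Phi, BoundedContinuousFunction.coe_ofNormedAddCommGroup]

end Phidef

section lipschitz

variable {L1 L2 d1 : ℝ} {J1 a : ℝ → ℝ}

/-- pointwise bound on the difference of the nonlocal terms. -/
lemma K_dist (hL : L1 ≤ L2) (hJ : KernelJ1 J1) (u v : ℝ →ᵇ ℝ) (t : ℝ) :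
    |K L1 L2 J1 u t - K L1 L2 J1 v t| ≤ dist u v := by
  obtain ⟨hJ0, hJc, hJi, hJm⟩ := hJ
  have hJt : Continuous (fun y => J1 (t - y)) := hJc.comp (continuous_const.sub continuous_id)
  have hiu : IntervalIntegrable (fun y => J1 (t - y) * u y) volume L1 L2 :=
    (hJt.mul u.continuous).intervalIntegrable _ _
  have hiv : IntervalIntegrable (fun y => J1 (t - y) * v y) volume L1 L2 :=
    (hJt.mul v.continuous).intervalIntegrable _ _
  have hsub : K L1 L2 J1 u t - K L1 L2 J1 v t
      = ∫ y in L1..L2, J1 (t - y) * (u y - v y) := by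
    unfold K
    rw [← intervalIntegral.integral_sub hiu hiv]
    congr 1
    funext y
    ring
  rw [hsub]
  have habs : IntervalIntegrable (fun y => |J1 (t - y) * (u y - v y)|) volume L1 L2 :=
    ((hJt.mul (u.continuous.sub v.continuous)).abs).intervalIntegrable _ _
  have hDint : IntervalIntegrable (fun y => J1 (t - y) * dist u v) volume L1 L2 :=
    (hJt.mul continuous_const).intervalIntegrable _ _
  calc |∫ y in L1..L2, J1 (t - y) * (u y - v y)|
      ≤ ∫ y in L1..L2, |J1 (t - y) * (u y - v y)| :=
        intervalIntegral.abs_integral_le_integral_abs hL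
    _ ≤ ∫ y in L1..L2, J1 (t - y) * dist u v := by
        apply intervalIntegral.integral_mono_on hL habs hDint
        intro y _
        rw [abs_mul, abs_of_nonneg (hJ0 _)]
        refine mul_le_mul_of_nonneg_left ?_ (hJ0 _)
        rw [← Real.dist_eq]
        exact BoundedContinuousFunction.dist_coe_le_dist y
    _ = (∫ y in L1..L2, J1 (t - y)) * dist u v := by
        rw [← intervalIntegral.integral_mul_const]
    _ ≤ 1 * dist u v :=
        mul_le_mul_of_nonneg_right (K_mass hL ⟨hJ0, hJc, hJi, hJm⟩ t) dist_nonneg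
    _ = dist u v := one_mul _

lemma Phi_dist (hL : L1 < L2) (hd1 : 0 < d1)
    (ha : Continuous a) (hpos : ∀ x, 0 < a x) (hJ : KernelJ1 J1)
    (u v : ℝ →ᵇ ℝ) :
    dist (Phi L1 L2 d1 J1 a hL.le hd1 ha hpos hJ.2.1 u)
        (Phi L1 L2 d1 J1 a hL.le hd1 ha hpos hJ.2.1 v)
      ≤ (1 - Real.exp (-(B L1 d1 a L2))) * dist u v := by
  have hJc : Continuous J1 := hJ.2.1
  have hD0 : (0:ℝ) ≤ dist u v := dist_nonneg
  have hBL2 : 0 ≤ B L1 d1 a L2 := B_nonneg hd1 hpos hL.le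
  have hθ0 : 0 ≤ 1 - Real.exp (-(B L1 d1 a L2)) := by
    have h := Real.exp_le_exp.mpr (neg_nonpos.mpr hBL2)
    rw [Real.exp_zero] at h
    linarith
  rw [BoundedContinuousFunction.dist_le (mul_nonneg hθ0 hD0)]
  intro x
  set z := clamp L1 L2 x with hzdef
  have hzm : z ∈ Icc L1 L2 := clamp_mem hL.le x
  rw [Phi_apply hL.le hd1 ha hpos hJc, Phi_apply hL.le hd1 ha hpos hJc, Real.dist_eq, ← hzdef]
  have hiu : IntervalIntegrable
      (fun t => g d1 a t * Real.exp (-(B L1 d1 a t)) * K L1 L2 J1 u t) volume z L2 :=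
    (rho_cont hd1 ha hpos hJc u.continuous).intervalIntegrable _ _
  have hiv : IntervalIntegrable
      (fun t => g d1 a t * Real.exp (-(B L1 d1 a t)) * K L1 L2 J1 v t) volume z L2 :=
    (rho_cont hd1 ha hpos hJc v.continuous).intervalIntegrable _ _
  have h1 : F L1 L2 d1 J1 a u z - F L1 L2 d1 J1 a v z = Real.exp (B L1 d1 a z) *
      ∫ t in z..L2, g d1 a t * Real.exp (-(B L1 d1 a t)) * (K L1 L2 J1 u t - K L1 L2 J1 v t) := by
    unfold F
    have hIs : (∫ t in z..L2,
        g d1 a t * Real.exp (-(B L1 d1 a t)) * (K L1 L2 J1 u t - K L1 L2 J1 v t))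
        = (∫ t in z..L2, g d1 a t * Real.exp (-(B L1 d1 a t)) * K L1 L2 J1 u t)
          - ∫ t in z..L2, g d1 a t * Real.exp (-(B L1 d1 a t)) * K L1 L2 J1 v t := by
      rw [← intervalIntegral.integral_sub hiu hiv]
      congr 1
      funext t
      ring
    rw [hIs]
    ring
  have habs : IntervalIntegrable
      (fun t => |g d1 a t * Real.exp (-(B L1 d1 a t)) * (K L1 L2 J1 u t - K L1 L2 J1 v t)|)
      volume z L2 :=
    ((((g_cont ha hpos).mul ((B_cont ha hpos).neg.rexp)).mul
      ((K_cont hJc u.continuous).sub (K_cont hJc v.continuous))).abs).intervalIntegrable _ _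
  have hDint : IntervalIntegrable
      (fun t => g d1 a t * Real.exp (-(B L1 d1 a t)) * dist u v) volume z L2 :=
    (((g_cont ha hpos).mul ((B_cont ha hpos).neg.rexp)).mul continuous_const).intervalIntegrable _ _
  have hgle : |∫ t in z..L2,
      g d1 a t * Real.exp (-(B L1 d1 a t)) * (K L1 L2 J1 u t - K L1 L2 J1 v t)|
      ≤ (Real.exp (-(B L1 d1 a z)) - Real.exp (-(B L1 d1 a L2))) * dist u v := by
    calc |∫ t in z..L2, g d1 a t * Real.exp (-(B L1 d1 a t)) * (K L1 L2 J1 u t - K L1 L2 J1 v t)|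
        ≤ ∫ t in z..L2,
            |g d1 a t * Real.exp (-(B L1 d1 a t)) * (K L1 L2 J1 u t - K L1 L2 J1 v t)| :=
          intervalIntegral.abs_integral_le_integral_abs hzm.2
      _ ≤ ∫ t in z..L2, g d1 a t * Real.exp (-(B L1 d1 a t)) * dist u v := by
          apply intervalIntegral.integral_mono_on hzm.2 habs hDint
          intro t _
          rw [abs_mul, abs_mul, abs_of_nonneg (g_pos hd1 hpos t).le,
            abs_of_nonneg (Real.exp_pos _).le]
          exact mul_le_mul_of_nonneg_left (K_dist hL.le ⟨hJ.1, hJc, hJ.2.2.1, hJ.2.2.2⟩ u v t)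
            (mul_nonneg (g_pos hd1 hpos t).le (Real.exp_pos _).le)
      _ = (∫ t in z..L2, g d1 a t * Real.exp (-(B L1 d1 a t))) * dist u v := by
          rw [← intervalIntegral.integral_mul_const]
      _ = (Real.exp (-(B L1 d1 a z)) - Real.exp (-(B L1 d1 a L2))) * dist u v := by
          rw [weight_integral ha hpos]
  have hkey : Real.exp (B L1 d1 a z) *
      ((Real.exp (-(B L1 d1 a z)) - Real.exp (-(B L1 d1 a L2))) * dist u v)
      ≤ (1 - Real.exp (-(B L1 d1 a L2))) * dist u v := by
    have h2 : Real.exp (B L1 d1 a z) * Real.exp (-(B L1 d1 a z)) = 1 := by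
      rw [← Real.exp_add]; simp
    have h3 : Real.exp (-(B L1 d1 a L2)) ≤ Real.exp (B L1 d1 a z) * Real.exp (-(B L1 d1 a L2)) :=
      le_mul_of_one_le_left (Real.exp_pos _).le (Real.one_le_exp (B_nonneg hd1 hpos hzm.1))
    have h4 : Real.exp (B L1 d1 a z) *
        ((Real.exp (-(B L1 d1 a z)) - Real.exp (-(B L1 d1 a L2))) * dist u v)
        = (1 - Real.exp (B L1 d1 a z) * Real.exp (-(B L1 d1 a L2))) * dist u v := by
      rw [show Real.exp (B L1 d1 a z) *
        ((Real.exp (-(B L1 d1 a z)) - Real.exp (-(B L1 d1 a L2))) * dist u v)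
        = (Real.exp (B L1 d1 a z) * Real.exp (-(B L1 d1 a z))
          - Real.exp (B L1 d1 a z) * Real.exp (-(B L1 d1 a L2))) * dist u v from by ring, h2]
    rw [h4]
    exact mul_le_mul_of_nonneg_right (by linarith) hD0
  calc |F L1 L2 d1 J1 a u z - F L1 L2 d1 J1 a v z|
      = Real.exp (B L1 d1 a z) * |∫ t in z..L2,
          g d1 a t * Real.exp (-(B L1 d1 a t)) * (K L1 L2 J1 u t - K L1 L2 J1 v t)| := by
        rw [h1, abs_mul, abs_of_nonneg (Real.exp_pos _).le]
    _ ≤ Real.exp (B L1 d1 a z) *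
          ((Real.exp (-(B L1 d1 a z)) - Real.exp (-(B L1 d1 a L2))) * dist u v) :=
        mul_le_mul_of_nonneg_left hgle (Real.exp_pos _).le
    _ ≤ (1 - Real.exp (-(B L1 d1 a L2))) * dist u v := hkey

end lipschitz

theorem aux (L1 L2 d1 : ℝ) (hL : L1 < L2) (hd1 : 0 < d1)
    (J1 : ℝ → ℝ) (hJ1 : KernelJ1 J1)
    (a : ℝ → ℝ) (ha : Continuous a) (hapos : ∀ x, 0 < a x) :
    ∃ Sstar : ℝ → ℝ,
      ContDiffOn ℝ 1 Sstar (Icc L1 L2) ∧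
      (∀ x ∈ Ioo L1 L2, 0 < Sstar x) ∧
      (∀ x ∈ Ioo L1 L2,
        d1 * ((∫ y in L1..L2, J1 (x - y) * Sstar y) - Sstar x)
          + a x * derivWithin Sstar (Icc L1 L2) x = 0) := by
  have hJc : Continuous J1 := hJ1.2.1
  have hJ0 : ∀ y, 0 ≤ J1 y := hJ1.1
  set Φ := Phi L1 L2 d1 J1 a hL.le hd1 ha hapos hJc with hΦdef
  have hBL2 : 0 ≤ B L1 d1 a L2 := B_nonneg hd1 hapos hL.le
  have hexp_pos : 0 < Real.exp (-(B L1 d1 a L2)) := Real.exp_pos _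
  have hexp_le : Real.exp (-(B L1 d1 a L2)) ≤ 1 := by
    have h := Real.exp_le_exp.mpr (neg_nonpos.mpr hBL2)
    rwa [Real.exp_zero] at h
  set θ : NNReal := ⟨1 - Real.exp (-(B L1 d1 a L2)), by linarith⟩ with hθdef
  have hθlt : θ < 1 := by
    rw [← NNReal.coe_lt_coe]
    show (1 - Real.exp (-(B L1 d1 a L2)) : ℝ) < 1
    linarith
  have hlip : LipschitzWith θ Φ := LipschitzWith.of_dist_le_mul (fun u v => by
    exact Phi_dist hL hd1 ha hapos hJ1 u v)
  have hcontr : ContractingWith θ Φ := ⟨hθlt, hlip⟩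
  set S : ℝ →ᵇ ℝ := ContractingWith.fixedPoint Φ hcontr with hSdef
  have hfix : Φ S = S := hcontr.fixedPoint_isFixedPt
  have hS0 : ∀ y, 0 ≤ S y := by
    set P : Set (ℝ →ᵇ ℝ) := {w | ∀ y, 0 ≤ w y} with hPdef
    have hPc : IsClosed P := by
      have hP : P = ⋂ y, {w : ℝ →ᵇ ℝ | 0 ≤ w y} := by
        ext w
        simp [hPdef, mem_iInter]
      rw [hP]
      refine isClosed_iInter fun y => ?_
      have hev : Continuous (fun w : ℝ →ᵇ ℝ => w y) := by
        refine (LipschitzWith.of_dist_le_mul (K := 1) fun w w' => ?_).continuous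
        simpa using BoundedContinuousFunction.dist_coe_le_dist y
      exact isClosed_le continuous_const hev
    have hPinv : ∀ w ∈ P, Φ w ∈ P := by
      intro w hw y
      rw [hΦdef, Phi_apply hL.le hd1 ha hapos hJc]
      have hzm : clamp L1 L2 y ∈ Icc L1 L2 := clamp_mem hL.le y
      unfold F
      have hI : 0 ≤ ∫ t in (clamp L1 L2 y)..L2,
          g d1 a t * Real.exp (-(B L1 d1 a t)) * K L1 L2 J1 w t :=
        intervalIntegral.integral_nonneg hzm.2 (fun t _ =>
          mul_nonneg (mul_nonneg (g_pos hd1 hapos t).le (Real.exp_pos _).le)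
            (K_nonneg hL.le hJ0 hw t))
      exact mul_nonneg (Real.exp_pos _).le (by linarith)
    have hiter : ∀ n, Φ^[n] 0 ∈ P := by
      intro n
      induction n with
      | zero => intro y; simp
      | succ n ih =>
        rw [Function.iterate_succ_apply']
        exact hPinv _ ih
    have htend := hcontr.tendsto_iterate_fixedPoint 0
    exact hPc.mem_of_tendsto htend (Filter.Eventually.of_forall hiter)
  have hSF : ∀ x ∈ Icc L1 L2, S x = F L1 L2 d1 J1 a S x := by
    intro x hx
    conv_lhs => rw [← hfix]
    rw [hΦdef, Phi_apply hL.le hd1 ha hapos hJc, clamp_of_mem hx]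
  have hd : ∀ x, HasDerivAt (F L1 L2 d1 J1 a S)
      (g d1 a x * F L1 L2 d1 J1 a S x - g d1 a x * K L1 L2 J1 S x) x :=
    F_hasDerivAt hd1 ha hapos hJc S.continuous
  refine ⟨F L1 L2 d1 J1 a S, ?_, ?_, ?_⟩
  · have hCD : ContDiff ℝ 1 (F L1 L2 d1 J1 a S) := by
      rw [contDiff_one_iff_deriv]
      refine ⟨fun x => (hd x).differentiableAt, ?_⟩
      have hder : deriv (F L1 L2 d1 J1 a S) = fun x =>
          g d1 a x * F L1 L2 d1 J1 a S x - g d1 a x * K L1 L2 J1 S x :=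
        funext fun x => (hd x).deriv
      rw [hder]
      exact ((g_cont ha hapos).mul (F_cont hd1 ha hapos hJc S.continuous)).sub
        ((g_cont ha hapos).mul (K_cont hJc S.continuous))
    exact hCD.contDiffOn
  · intro x hx
    have hI : 0 ≤ ∫ t in x..L2,
        g d1 a t * Real.exp (-(B L1 d1 a t)) * K L1 L2 J1 S t :=
      intervalIntegral.integral_nonneg hx.2.le (fun t _ =>
        mul_nonneg (mul_nonneg (g_pos hd1 hapos t).le (Real.exp_pos _).le)
          (K_nonneg hL.le hJ0 hS0 t))
    unfold F
    exact mul_pos (Real.exp_pos _) (by linarith)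
  · intro x hx
    have hmem : Icc L1 L2 ∈ nhds x := Icc_mem_nhds hx.1 hx.2
    rw [derivWithin_of_mem_nhds hmem, (hd x).deriv]
    have hKeq : (∫ y in L1..L2, J1 (x - y) * F L1 L2 d1 J1 a S y) = K L1 L2 J1 S x := by
      unfold K
      apply intervalIntegral.integral_congr
      intro y hy
      rw [uIcc_of_le hL.le] at hy
      dsimp only
      rw [← hSF y hy]
    rw [hKeq]
    have hax : a x ≠ 0 := (hapos x).ne'
    simp only [g]
    field_simp
    ring

end DFE

/-- existence of a disease-free equilibrium of the nonlocal
dispersal–advection equation. -/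
theorem disease_free_equilibrium_exists
    (L1 L2 d1 : ℝ) (hL : L1 < L2) (hd1 : 0 < d1)
    (J1 : ℝ → ℝ) (hJ1 : KernelJ1 J1)
    (a : ℝ → ℝ) (ha : ContinuousOn a (Icc L1 L2))
    (hapos : ∀ x ∈ Icc L1 L2, 0 < a x) :
    ∃ Sstar : ℝ → ℝ,
      ContDiffOn ℝ 1 Sstar (Icc L1 L2) ∧
      (∀ x ∈ Ioo L1 L2, 0 < Sstar x) ∧
      (∀ x ∈ Ioo L1 L2,
        d1 * ((∫ y in L1..L2, J1 (x - y) * Sstar y) - Sstar x)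
          + a x * derivWithin Sstar (Icc L1 L2) x = 0) := by
  set A : ℝ → ℝ := fun x => a (DFE.clamp L1 L2 x) with hA
  have hAc : Continuous A :=
    ha.comp_continuous (DFE.clamp_continuous L1 L2) (fun x => DFE.clamp_mem hL.le x)
  have hApos : ∀ x, 0 < A x := fun x => hapos _ (DFE.clamp_mem hL.le x)
  obtain ⟨Sstar, h1, h2, h3⟩ := DFE.aux L1 L2 d1 hL hd1 J1 hJ1 A hAc hApos
  refine ⟨Sstar, h1, h2, fun x hx => ?_⟩
  have h := h3 x hx
  have hAx : A x = a x := by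
    rw [hA]
    simp only
    rw [DFE.clamp_of_mem (Ioo_subset_Icc_self hx)]
  rwa [hAx] at h
end

section
/- Let g, h : [0,T] → ℝ be differentiable with g(t) ≤ h(t) for all t ∈ [0,T], and let S : [0,T] × ℝ → ℝ be measurable with 0 ≤ S(t,x) ≤ M for all (t,x). Suppose that for all t ∈ [0,T], h′(t) = μ ∫_{g(t)}^{h(t)} ∫_{h(t)}^∞ J(x−y) S(t,x) dy dx and g′(t) = −μ ∫_{g(t)}^{h(t)} ∫_{−∞}^{g(t)} J(x−y) S(t,x) dy dx. Then for all t ∈ [0,T]: 0 ≤ h′(t) ≤ μM·(h(t)−g(t)) and 0 ≤ −g′(t) ≤ μM·(h(t)−g(t)) (so h is nondecreasing and g is nonincreasing), and h(t) − g(t) ≤ (h(0) − g(0))·e^{2μMt}. -/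
open MeasureTheory Set

lemma inner_int_bounds (J : ℝ → ℝ) (hJnn : ∀ x, 0 ≤ J x) (hJint : Integrable J)
    (hJ1 : (∫ x, J x) = 1) (s : Set ℝ) (hs : MeasurableSet s) (x : ℝ) :
    0 ≤ (∫ y in s, J (x - y)) ∧ (∫ y in s, J (x - y)) ≤ 1 := by
  constructor
  · exact setIntegral_nonneg hs fun y _ => hJnn _
  · calc (∫ y in s, J (x - y)) ≤ ∫ y, J (x - y) := by
          apply setIntegral_le_integral (hJint.comp_sub_left x)
          filter_upwards with y using hJnn _
    _ = ∫ y, J y := integral_sub_left_eq_self J _ x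
    _ = 1 := hJ1

lemma interval_int_bounds (F : ℝ → ℝ) (M : ℝ) (a b : ℝ) (hab : a ≤ b)
    (hF : ∀ x, 0 ≤ F x ∧ F x ≤ M) :
    0 ≤ (∫ x in a..b, F x) ∧ (∫ x in a..b, F x) ≤ M * (b - a) := by
  constructor
  · exact intervalIntegral.integral_nonneg hab fun u _ => (hF u).1
  · have hnorm : ‖∫ x in a..b, F x‖ ≤ M * |b - a| := by
      apply intervalIntegral.norm_integral_le_of_norm_le_const
      intro x _
      rw [Real.norm_eq_abs, abs_of_nonneg (hF x).1]
      exact (hF x).2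
    calc (∫ x in a..b, F x) ≤ ‖∫ x in a..b, F x‖ := by
          rw [Real.norm_eq_abs]; exact le_abs_self _
      _ ≤ M * |b - a| := hnorm
      _ = M * (b - a) := by rw [abs_of_nonneg (sub_nonneg.2 hab)]

/-- quantitative bounds on the free boundaries: the speeds are
controlled by the habitat length, `h` is nondecreasing, `g` is nonincreasing, and the
habitat length grows at most exponentially. -/
theorem free_boundary_bounds
    (J : ℝ → ℝ) (hJnn : ∀ x, 0 ≤ J x) (hJint : Integrable J) (hJ1 : (∫ x, J x) = 1)
    (mu M T : ℝ) (hmu : 0 < mu) (hM : 0 ≤ M) (hT : 0 < T)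
    (g h : ℝ → ℝ)
    (hgd : ∀ t ∈ Icc (0:ℝ) T, DifferentiableWithinAt ℝ g (Icc 0 T) t)
    (hhd : ∀ t ∈ Icc (0:ℝ) T, DifferentiableWithinAt ℝ h (Icc 0 T) t)
    (hgh : ∀ t ∈ Icc (0:ℝ) T, g t ≤ h t)
    (S : ℝ → ℝ → ℝ)
    (hSm : Measurable (fun p : ℝ × ℝ => S p.1 p.2))
    (hSb : ∀ t x, 0 ≤ S t x ∧ S t x ≤ M)
    (hode : ∀ t ∈ Icc (0:ℝ) T,
      derivWithin h (Icc 0 T) t =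
        mu * ∫ x in g t..h t, (∫ y in Ioi (h t), J (x - y)) * S t x)
    (gode : ∀ t ∈ Icc (0:ℝ) T,
      derivWithin g (Icc 0 T) t =
        -(mu * ∫ x in g t..h t, (∫ y in Iio (g t), J (x - y)) * S t x)) :
    (∀ t ∈ Icc (0:ℝ) T,
      0 ≤ derivWithin h (Icc 0 T) t ∧
      derivWithin h (Icc 0 T) t ≤ mu * M * (h t - g t) ∧
      0 ≤ -derivWithin g (Icc 0 T) t ∧
      -derivWithin g (Icc 0 T) t ≤ mu * M * (h t - g t)) ∧
    MonotoneOn h (Icc 0 T) ∧ AntitoneOn g (Icc 0 T) ∧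
    (∀ t ∈ Icc (0:ℝ) T, h t - g t ≤ (h 0 - g 0) * Real.exp (2 * mu * M * t)) := by
  -- pointwise bounds on integrands
  have hFh : ∀ t x, 0 ≤ (∫ y in Ioi (h t), J (x - y)) * S t x ∧
      (∫ y in Ioi (h t), J (x - y)) * S t x ≤ M := by
    intro t x
    obtain ⟨h1, h2⟩ := inner_int_bounds J hJnn hJint hJ1 (Ioi (h t)) measurableSet_Ioi x
    obtain ⟨s1, s2⟩ := hSb t x
    refine ⟨mul_nonneg h1 s1, ?_⟩
    have := mul_le_mul h2 s2 s1 zero_le_one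
    linarith
  have hFg : ∀ t x, 0 ≤ (∫ y in Iio (g t), J (x - y)) * S t x ∧
      (∫ y in Iio (g t), J (x - y)) * S t x ≤ M := by
    intro t x
    obtain ⟨h1, h2⟩ := inner_int_bounds J hJnn hJint hJ1 (Iio (g t)) measurableSet_Iio x
    obtain ⟨s1, s2⟩ := hSb t x
    refine ⟨mul_nonneg h1 s1, ?_⟩
    have := mul_le_mul h2 s2 s1 zero_le_one
    linarith
  have key : ∀ t ∈ Icc (0:ℝ) T,
      0 ≤ derivWithin h (Icc 0 T) t ∧
      derivWithin h (Icc 0 T) t ≤ mu * M * (h t - g t) ∧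
      0 ≤ -derivWithin g (Icc 0 T) t ∧
      -derivWithin g (Icc 0 T) t ≤ mu * M * (h t - g t) := by
    intro t ht
    obtain ⟨Ih1, Ih2⟩ := interval_int_bounds _ M (g t) (h t) (hgh t ht) (hFh t)
    obtain ⟨Ig1, Ig2⟩ := interval_int_bounds _ M (g t) (h t) (hgh t ht) (hFg t)
    rw [hode t ht, gode t ht]
    refine ⟨mul_nonneg hmu.le Ih1, ?_, by simpa using mul_nonneg hmu.le Ig1, ?_⟩
    · calc mu * ∫ x in g t..h t, (∫ y in Ioi (h t), J (x - y)) * S t x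
          ≤ mu * (M * (h t - g t)) := by gcongr
        _ = mu * M * (h t - g t) := by ring
    · rw [neg_neg]
      calc mu * ∫ x in g t..h t, (∫ y in Iio (g t), J (x - y)) * S t x
          ≤ mu * (M * (h t - g t)) := by gcongr
        _ = mu * M * (h t - g t) := by ring
  refine ⟨key, ?_, ?_, ?_⟩
  · -- MonotoneOn h
    apply monotoneOn_of_deriv_nonneg (convex_Icc 0 T)
      (fun t ht => (hhd t ht).continuousWithinAt)
    · intro x hx
      rw [interior_Icc] at hx
      exact ((hhd x ⟨hx.1.le, hx.2.le⟩).differentiableAt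
        (Icc_mem_nhds hx.1 hx.2)).differentiableWithinAt
    · intro x hx
      rw [interior_Icc] at hx
      have hx' : x ∈ Icc (0:ℝ) T := ⟨hx.1.le, hx.2.le⟩
      have hd : DifferentiableAt ℝ h x :=
        (hhd x hx').differentiableAt (Icc_mem_nhds hx.1 hx.2)
      have : deriv h x = derivWithin h (Icc 0 T) x := by
        rw [hd.derivWithin (uniqueDiffOn_Icc hT x hx')]
      rw [this]
      exact (key x hx').1
  · -- AntitoneOn g
    apply antitoneOn_of_deriv_nonpos (convex_Icc 0 T)
      (fun t ht => (hgd t ht).continuousWithinAt)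
    · intro x hx
      rw [interior_Icc] at hx
      exact ((hgd x ⟨hx.1.le, hx.2.le⟩).differentiableAt
        (Icc_mem_nhds hx.1 hx.2)).differentiableWithinAt
    · intro x hx
      rw [interior_Icc] at hx
      have hx' : x ∈ Icc (0:ℝ) T := ⟨hx.1.le, hx.2.le⟩
      have hd : DifferentiableAt ℝ g x :=
        (hgd x hx').differentiableAt (Icc_mem_nhds hx.1 hx.2)
      have : deriv g x = derivWithin g (Icc 0 T) x := by
        rw [hd.derivWithin (uniqueDiffOn_Icc hT x hx')]
      rw [this]
      have := (key x hx').2.2.1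
      linarith
  · -- Gronwall
    intro t ht
    set f : ℝ → ℝ := fun t => h t - g t with hf
    set f' : ℝ → ℝ := fun t => derivWithin h (Icc 0 T) t - derivWithin g (Icc 0 T) t with hf'
    have hfc : ContinuousOn f (Icc 0 T) :=
      fun x hx => ((hhd x hx).sub (hgd x hx)).continuousWithinAt
    have hfd : ∀ x ∈ Ico (0:ℝ) T, HasDerivWithinAt f (f' x) (Ici x) x := by
      intro x hx
      have hx' : x ∈ Icc (0:ℝ) T := ⟨hx.1, hx.2.le⟩
      have h1 : HasDerivWithinAt h (derivWithin h (Icc 0 T) x) (Icc 0 T) x :=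
        (hhd x hx').hasDerivWithinAt
      have h2 : HasDerivWithinAt g (derivWithin g (Icc 0 T) x) (Icc 0 T) x :=
        (hgd x hx').hasDerivWithinAt
      exact ((h1.sub h2).mono_of_mem_nhdsWithin (Icc_mem_nhdsGE_of_mem hx))
    have hfnn : ∀ x ∈ Icc (0:ℝ) T, 0 ≤ f x := fun x hx => sub_nonneg.2 (hgh x hx)
    have h0T : (0:ℝ) ∈ Icc (0:ℝ) T := ⟨le_refl 0, hT.le⟩
    have ha : ‖f 0‖ ≤ h 0 - g 0 := by
      rw [Real.norm_eq_abs, abs_of_nonneg (hfnn 0 h0T)]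
    have bound : ∀ x ∈ Ico (0:ℝ) T, ‖f' x‖ ≤ (2 * mu * M) * ‖f x‖ + 0 := by
      intro x hx
      have hx' : x ∈ Icc (0:ℝ) T := ⟨hx.1, hx.2.le⟩
      obtain ⟨k1, k2, k3, k4⟩ := key x hx'
      rw [Real.norm_eq_abs, Real.norm_eq_abs, abs_of_nonneg (hfnn x hx'),
        abs_of_nonneg (by simp only [hf']; linarith)]
      simp only [hf', hf]
      linarith
    have := norm_le_gronwallBound_of_norm_deriv_right_le hfc hfd ha bound t ht
    rw [gronwallBound_ε0, sub_zero] at this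
    calc h t - g t = f t := rfl
      _ ≤ ‖f t‖ := by rw [Real.norm_eq_abs]; exact le_abs_self _
      _ ≤ (h 0 - g 0) * Real.exp (2 * mu * M * t) := this
end
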